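/- Let A be a commutative ring and f ∈ A. A morphism τ: M → N of A-modules is an isomorphism if and only if both the localization τ[1/f]: M[1/f] → N[1/f] and the reduction τ ⊗_A A/f together with the induced map Tor_1^A(M, A/f) → Tor_1^A(N, A/f) are isomorphisms. In particular, for complexes: τ: M → N in D(A) is a quasi-isomorphism if and only if τ[1/f] and τ ⊗^L_A A/f are quasi-isomorphisms. -/
import Mathlib


/-- Stratification principle: a map `τ : M → N` of `A`-modules is an isomorphism if and
only if its localization away from `f` is an isomorphism, its reduction mod `f`
(the induced map `M/fM → N/fN`) is an isomorphism, and the induced map on `f`-torsion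
(i.e. on `Tor_1` against the Koszul complex `A/^L f`, which is `ker (f : M → M)`)
is an isomorphism.  The quotient and kernel conditions are stated element-wise. -/
theorem stmt7 (A : Type*) [CommRing A] (f : A)
    (M N : Type*) [AddCommGroup M] [Module A M] [AddCommGroup N] [Module A N]
    (τ : M →ₗ[A] N) :
    Function.Bijective τ ↔
      (Function.Bijective (LocalizedModule.map (Submonoid.powers f) τ) ∧
       ((∀ x : M, (∃ z : N, τ x = f • z) → ∃ w : M, x = f • w) ∧
        (∀ y : N, ∃ x : M, ∃ z : N, y = τ x + f • z)) ∧
       ((∀ x : M, f • x = 0 → τ x = 0 → x = 0) ∧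
        (∀ y : N, f • y = 0 → ∃ x : M, f • x = 0 ∧ τ x = y))) := by
  constructor
  · rintro ⟨hinj, hsurj⟩
    refine ⟨⟨LocalizedModule.map_injective _ τ hinj,
        LocalizedModule.map_surjective _ τ hsurj⟩, ⟨?_, ?_⟩, ⟨?_, ?_⟩⟩
    · rintro x ⟨z, hz⟩
      obtain ⟨w, rfl⟩ := hsurj z
      exact ⟨w, hinj (by simpa using hz)⟩
    · intro y
      obtain ⟨x, rfl⟩ := hsurj y
      exact ⟨x, 0, by simp⟩
    · intro x _ hx
      exact hinj (by simpa using hx)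
    · intro y hy
      obtain ⟨x, rfl⟩ := hsurj y
      refine ⟨x, hinj ?_, rfl⟩
      simpa using hy
  · rintro ⟨⟨hlinj, hlsurj⟩, ⟨hqi, _⟩, hti, hts⟩
    -- key induction for injectivity
    have inj_aux : ∀ n : ℕ, ∀ x : M, f ^ n • x = 0 → τ x = 0 → x = 0 := by
      intro n
      induction n with
      | zero => intro x hx _; simpa using hx
      | succ n ih =>
        intro x hx hτx
        refine ih x ?_ hτx
        refine hti (f ^ n • x) ?_ ?_
        · rw [smul_smul, ← pow_succ']; exact hx
        · rw [map_smul, hτx, smul_zero]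
    -- key induction for surjectivity
    have surj_aux : ∀ n : ℕ, ∀ z : N, (∃ x : M, τ x = f ^ n • z) → ∃ x : M, τ x = z := by
      intro n
      induction n with
      | zero => intro z hz; simpa using hz
      | succ n ih =>
        rintro z ⟨x, hx⟩
        obtain ⟨w, rfl⟩ := hqi x ⟨f ^ n • z, by rw [hx, smul_smul, ← pow_succ']⟩
        have h1 : f • (τ w - f ^ n • z) = 0 := by
          rw [smul_sub, ← map_smul, hx, smul_smul, ← pow_succ', sub_self]
        obtain ⟨v, hv0, hv⟩ := hts _ h1
        refine ih z ⟨w - v, ?_⟩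
        rw [map_sub, hv, sub_sub_cancel]
    constructor
    · intro a b hab
      have h0 : τ (a - b) = 0 := by rw [map_sub, hab, sub_self]
      have : LocalizedModule.map (Submonoid.powers f) τ (LocalizedModule.mk (a - b) 1)
          = LocalizedModule.map (Submonoid.powers f) τ (LocalizedModule.mk 0 1) := by
        rw [LocalizedModule.map_mk, LocalizedModule.map_mk, h0, map_zero]
      have h2 := hlinj this
      rw [LocalizedModule.mk_eq] at h2
      obtain ⟨⟨u, n, rfl⟩, hu⟩ := h2
      simp only [Submonoid.mk_smul, one_smul, smul_zero] at hu
      have hu' : f ^ n • (a - b) = 0 := hu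
      exact sub_eq_zero.mp (inj_aux n (a - b) hu' h0)
    · intro y
      obtain ⟨m, hm⟩ := hlsurj (LocalizedModule.mk y 1)
      have hrep : ∀ m : LocalizedModule (Submonoid.powers f) M,
          ∃ x s, m = LocalizedModule.mk x s :=
        fun m => LocalizedModule.induction_on (fun x s => ⟨x, s, rfl⟩) m
      obtain ⟨x, s, rfl⟩ := hrep m
      rw [LocalizedModule.map_mk, LocalizedModule.mk_eq] at hm
      obtain ⟨⟨u, j, rfl⟩, hu⟩ := hm
      obtain ⟨t, k, rfl⟩ := s
      simp only [Submonoid.mk_smul, one_smul] at hu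
      have hu' : f ^ j • τ x = f ^ j • f ^ k • y := hu
      refine surj_aux (j + k) y ⟨f ^ j • x, ?_⟩
      rw [map_smul, hu', smul_smul, ← pow_add]
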